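/- There exist universal constants a₀, c₀ > 0 (independent of B and δ) such that for every B ≥ 1 and every δ = (δ_1,…,δ_B) with each |δ_t| ≤ 1/4 satisfying KL(P_δ ‖ P_0) ≥ a₀, the log-likelihood ratio L satisfies P_δ( L ≤ (1/2)·KL(P_δ ‖ P_0) ) ≤ exp(−c₀·KL(P_δ ‖ P_0)). -/

import Mathlib

open Real

/-- Probability mass of a Bernoulli(p) outcome. -/
def bernPMF (p : ℝ) : Bool → ℝ := fun b => if b then p else 1 - p

/-- Probability mass function of the product measure `P_δ` on `{0,1}^B` whose `t`-th
coordinate is `Bernoulli(1/2 + δ t)`. -/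
noncomputable def prodPMF (B : ℕ) (δ : Fin B → ℝ) (y : Fin B → Bool) : ℝ :=
  ∏ t, bernPMF (1/2 + δ t) (y t)

/-- KL budget `K(δ) = KL(P_δ ‖ P_0)` where `P_0` is the uniform measure on `{0,1}^B`. -/
noncomputable def klProd (B : ℕ) (δ : Fin B → ℝ) : ℝ :=
  ∑ y : Fin B → Bool,
    prodPMF B δ y * Real.log (prodPMF B δ y / prodPMF B (fun _ => 0) y)

/-- Probability of an event `E ⊆ {0,1}^B` under the product measure `P_δ`. -/
noncomputable def probEvent (B : ℕ) (δ : Fin B → ℝ) (E : Set (Fin B → Bool)) : ℝ :=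
  ∑ y : Fin B → Bool, E.indicator (prodPMF B δ) y

/-- Log-likelihood ratio of `P_δ` against `P_0` at outcome `y ∈ {0,1}^B`:
`L(y) = Σ_t [ y_t·log(2(1/2+δ_t)) + (1−y_t)·log(2(1/2−δ_t)) ]`. -/
noncomputable def llr (B : ℕ) (δ : Fin B → ℝ) (y : Fin B → Bool) : ℝ :=
  ∑ t, (if y t then Real.log (2 * (1/2 + δ t)) else Real.log (2 * (1/2 - δ t)))

lemma exp_le_one_add_add_sq {u : ℝ} (hu : |u| ≤ 1) : Real.exp u ≤ 1 + u + u ^ 2 := by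
  have h := Real.exp_bound hu (by norm_num : 0 < 2)
  have h2 : ∑ m ∈ Finset.range 2, u ^ m / m.factorial = 1 + u := by
    simp [Finset.sum_range_succ]
  rw [h2] at h
  norm_num [Nat.factorial] at h
  have h3 := (abs_sub_le_iff.1 h).1
  have h4 : |u| ^ 2 = u ^ 2 := sq_abs u
  nlinarith [sq_nonneg u]

lemma log_one_add_ge {x : ℝ} (h0 : 0 ≤ x) (h1 : x ≤ 1/2) :
    x - x^2/2 ≤ Real.log (1 + x) := by
  rw [Real.le_log_iff_exp_le (by linarith)]
  have ht0 : 0 ≤ x - x^2/2 := by nlinarith [mul_nonneg h0 (show (0:ℝ) ≤ 1 - x/2 by linarith)]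
  have ht1 : x - x^2/2 ≤ 1 := by nlinarith [sq_nonneg x]
  have h := Real.exp_bound' ht0 ht1 (by norm_num : 0 < 3)
  norm_num [Finset.sum_range_succ, Nat.factorial] at h
  nlinarith [sq_nonneg x, pow_nonneg h0 3, pow_nonneg h0 4, pow_nonneg h0 5, pow_nonneg h0 6]

lemma log_one_sub_ge {x : ℝ} (h0 : 0 ≤ x) (h1 : x ≤ 1/2) :
    -x - x^2 ≤ Real.log (1 - x) := by
  rw [Real.le_log_iff_exp_le (by linarith)]
  have key : 1 ≤ (1 - x) * Real.exp (x + x^2) := by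
    have h := Real.sum_le_exp_of_nonneg (by positivity : (0:ℝ) ≤ x + x^2) 4
    norm_num [Finset.sum_range_succ, Nat.factorial] at h
    nlinarith [pow_nonneg h0 3, pow_nonneg h0 4, pow_nonneg h0 5, pow_nonneg h0 6, sq_nonneg x]
  have hexp : Real.exp (-x - x^2) = (Real.exp (x + x^2))⁻¹ := by
    rw [← Real.exp_neg]; ring_nf
  rw [hexp, inv_le_iff_one_le_mul₀ (Real.exp_pos _)]
  linarith [key]

lemma h_lower {x : ℝ} (h0 : 0 ≤ x) (h1 : x ≤ 1/2) :
    x^2/4 ≤ ((1+x)/2) * Real.log (1+x) + ((1-x)/2) * Real.log (1-x) := by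
  have ha := log_one_add_ge h0 h1
  have hb := log_one_sub_ge h0 h1
  nlinarith [mul_le_mul_of_nonneg_left ha (show (0:ℝ) ≤ (1+x)/2 by linarith),
             mul_le_mul_of_nonneg_left hb (show (0:ℝ) ≤ (1-x)/2 by linarith),
             pow_nonneg h0 3]

/-- per-coordinate KL. -/
noncomputable def kco (d : ℝ) : ℝ :=
  (1/2 + d) * Real.log (2 * (1/2 + d)) + (1/2 - d) * Real.log (2 * (1/2 - d))

lemma kco_ge {d : ℝ} (hd : |d| ≤ 1/4) : d^2 ≤ kco d := by
  rcases abs_le.1 hd with ⟨hdl, hdr⟩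
  unfold kco
  rcases le_or_gt 0 d with h | h
  · have H := h_lower (x := 2*d) (by linarith) (by linarith)
    have e1 : 2 * (1/2 + d) = 1 + 2*d := by ring
    have e2 : 2 * (1/2 - d) = 1 - 2*d := by ring
    rw [e1, e2]
    nlinarith [H]
  · have H := h_lower (x := -(2*d)) (by linarith) (by linarith)
    have e1 : 2 * (1/2 + d) = 1 - -(2*d) := by ring
    have e2 : 2 * (1/2 - d) = 1 + -(2*d) := by ring
    rw [e1, e2]
    nlinarith [H]

lemma log_gap {e : ℝ} (h0 : 0 ≤ e) (h1 : e ≤ 1/2) :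
    0 ≤ Real.log (1+e) - Real.log (1-e) ∧ Real.log (1+e) - Real.log (1-e) ≤ 3*e := by
  constructor
  · apply sub_nonneg.2
    apply Real.log_le_log (by linarith) (by linarith)
  · have hA : Real.log (1+e) ≤ e := by
      have := Real.log_le_sub_one_of_pos (show (0:ℝ) < 1+e by linarith)
      linarith
    have hB : -(2*e) ≤ Real.log (1-e) := by
      have hpos : (0:ℝ) < 1 - e := by linarith
      have h2 : (1-e)⁻¹ ≤ 1 + 2*e := by
        rw [inv_le_iff_one_le_mul₀ hpos]; nlinarith
      have h3 := Real.log_le_sub_one_of_pos (show (0:ℝ) < (1-e)⁻¹ by positivity)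
      rw [Real.log_inv] at h3
      linarith
    linarith

set_option maxHeartbeats 1000000 in
lemma coord_mgf {d : ℝ} (hd : |d| ≤ 1/4) :
    (1/2 + d) * Real.exp ((1/144) * (kco d - Real.log (2 * (1/2 + d)))) +
      (1/2 - d) * Real.exp ((1/144) * (kco d - Real.log (2 * (1/2 - d)))) ≤
    Real.exp (kco d / 576) := by
  rcases abs_le.1 hd with ⟨hdl, hdr⟩
  set a := Real.log (2 * (1/2 + d)) with haa
  set b := Real.log (2 * (1/2 - d)) with hbb
  have hk : kco d = (1/2 + d) * a + (1/2 - d) * b := by simp only [kco, haa, hbb]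
  -- gap bound
  have hgap : |a - b| ≤ 6 * |d| := by
    rcases le_or_gt 0 d with h | h
    · have e1 : 2 * (1/2 + d) = 1 + 2*d := by ring
      have e2 : 2 * (1/2 - d) = 1 - 2*d := by ring
      have H := log_gap (e := 2*d) (by linarith) (by linarith)
      rw [haa, hbb, e1, e2, abs_of_nonneg H.1, abs_of_nonneg h]
      linarith [H.2]
    · have e1 : 2 * (1/2 + d) = 1 - -(2*d) := by ring
      have e2 : 2 * (1/2 - d) = 1 + -(2*d) := by ring
      have H := log_gap (e := -(2*d)) (by linarith) (by linarith)
      rw [haa, hbb, e1, e2, abs_sub_comm, abs_of_nonneg H.1, abs_of_neg h]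
      linarith [H.2]
  have hka : |kco d - a| ≤ 6 * |d| := by
    have : kco d - a = (1/2 - d) * (b - a) := by rw [hk]; ring
    rw [this, abs_mul, abs_sub_comm b a]
    calc |1/2 - d| * |a - b| ≤ 1 * (6 * |d|) := by
          apply mul_le_mul _ hgap (abs_nonneg _) zero_le_one
          rw [abs_le]; constructor <;> linarith
      _ = 6 * |d| := by ring
  have hkb : |kco d - b| ≤ 6 * |d| := by
    have : kco d - b = (1/2 + d) * (a - b) := by rw [hk]; ring
    rw [this, abs_mul]
    calc |1/2 + d| * |a - b| ≤ 1 * (6 * |d|) := by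
          apply mul_le_mul _ hgap (abs_nonneg _) zero_le_one
          rw [abs_le]; constructor <;> linarith
      _ = 6 * |d| := by ring
  have hd6 : 6 * |d| ≤ 3/2 := by
    have := abs_le.1 hd; linarith [abs_le.2 this]
  set ua := (1/144 : ℝ) * (kco d - a) with hua
  set ub := (1/144 : ℝ) * (kco d - b) with hub
  have huaa : |ua| ≤ 1 := by
    rw [hua, abs_mul, abs_of_nonneg (by norm_num : (0:ℝ) ≤ 1/144)]
    nlinarith [hka]
  have hubb : |ub| ≤ 1 := by
    rw [hub, abs_mul, abs_of_nonneg (by norm_num : (0:ℝ) ≤ 1/144)]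
    nlinarith [hkb]
  have hea := exp_le_one_add_add_sq huaa
  have heb := exp_le_one_add_add_sq hubb
  have hua2 : ua^2 ≤ d^2 / 576 := by
    have h1 : |ua| ≤ |d| / 24 := by
      rw [hua, abs_mul, abs_of_nonneg (by norm_num : (0:ℝ) ≤ 1/144)]
      nlinarith [hka]
    calc ua^2 ≤ (|d|/24)^2 := by
          rw [← sq_abs ua]
          exact pow_le_pow_left₀ (abs_nonneg _) h1 2
      _ = d^2 / 576 := by rw [div_pow, sq_abs]; ring
  have hub2 : ub^2 ≤ d^2 / 576 := by
    have h1 : |ub| ≤ |d| / 24 := by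
      rw [hub, abs_mul, abs_of_nonneg (by norm_num : (0:ℝ) ≤ 1/144)]
      nlinarith [hkb]
    calc ub^2 ≤ (|d|/24)^2 := by
          rw [← sq_abs ub]
          exact pow_le_pow_left₀ (abs_nonneg _) h1 2
      _ = d^2 / 576 := by rw [div_pow, sq_abs]; ring
  have hdk : d^2 ≤ kco d := kco_ge hd
  have hzero : (1/2 + d) * ua + (1/2 - d) * ub = 0 := by
    rw [hua, hub, hk]; ring
  have hfin : (1/2 + d) * Real.exp ua + (1/2 - d) * Real.exp ub ≤ 1 + kco d / 576 := by
    have hp0 : (0:ℝ) ≤ 1/2 + d := by linarith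
    have hq0 : (0:ℝ) ≤ 1/2 - d := by linarith
    have h1 := mul_le_mul_of_nonneg_left hea hp0
    have h2 := mul_le_mul_of_nonneg_left heb hq0
    have h3 := mul_le_mul_of_nonneg_left hua2 hp0
    have h4 := mul_le_mul_of_nonneg_left hub2 hq0
    have e1 : (1/2+d) * (1+ua+ua^2) = (1/2+d) + (1/2+d)*ua + (1/2+d)*ua^2 := by ring
    have e2 : (1/2-d) * (1+ub+ub^2) = (1/2-d) + (1/2-d)*ub + (1/2-d)*ub^2 := by ring
    have e3 : (1/2+d)*(d^2/576) + (1/2-d)*(d^2/576) = d^2/576 := by ring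
    rw [e1] at h1
    rw [e2] at h2
    linarith [hzero, hdk, h1, h2, h3, h4, e3]
  calc (1/2 + d) * Real.exp ua + (1/2 - d) * Real.exp ub ≤ 1 + kco d / 576 := hfin
    _ ≤ Real.exp (kco d / 576) := by
        have := Real.add_one_le_exp (kco d / 576); linarith

lemma sum_prod_bool {B : ℕ} (g : Fin B → Bool → ℝ) :
    ∑ y : Fin B → Bool, ∏ t, g t (y t) = ∏ t, (g t true + g t false) := by
  rw [← Fintype.prod_sum]
  exact Finset.prod_congr rfl fun t _ => by rw [Fintype.sum_bool]

lemma marginal {B : ℕ} (δ : Fin B → ℝ) (t : Fin B) (h : Bool → ℝ) :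
    ∑ y : Fin B → Bool, prodPMF B δ y * h (y t)
      = (1/2 + δ t) * h true + (1/2 - δ t) * h false := by
  classical
  have key : ∀ y : Fin B → Bool, prodPMF B δ y * h (y t)
      = ∏ s, (bernPMF (1/2 + δ s) (y s) * (if s = t then h (y s) else 1)) := by
    intro y
    rw [Finset.prod_mul_distrib]
    congr 1
    rw [Finset.prod_ite_eq' Finset.univ t (fun s => h (y s))]
    simp
  simp_rw [key]
  rw [sum_prod_bool (fun s v => bernPMF (1/2 + δ s) v * (if s = t then h v else 1))]
  rw [Finset.prod_eq_single t]
  · simp only [if_pos rfl, bernPMF, if_true, Bool.false_eq_true, if_false]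
    ring
  · intro s _ hs
    simp [bernPMF, hs]
  · simp


section main
variable {B : ℕ} {δ : Fin B → ℝ}

lemma bern_pos (hδ : ∀ t, |δ t| ≤ 1/4) (t : Fin B) (v : Bool) :
    (0:ℝ) < bernPMF (1/2 + δ t) v := by
  rcases abs_le.1 (hδ t) with ⟨h1, h2⟩
  cases v <;> simp [bernPMF] <;> linarith

lemma prodPMF_pos (hδ : ∀ t, |δ t| ≤ 1/4) (y : Fin B → Bool) :
    0 < prodPMF B δ y :=
  Finset.prod_pos fun t _ => bern_pos hδ t (y t)

lemma log_ratio (hδ : ∀ t, |δ t| ≤ 1/4) (y : Fin B → Bool) :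
    Real.log (prodPMF B δ y / prodPMF B (fun _ => 0) y) = llr B δ y := by
  have h0 : prodPMF B (fun _ => 0) y = ∏ _t : Fin B, (1/2 : ℝ) := by
    unfold prodPMF
    exact Finset.prod_congr rfl fun t _ => by cases (y t) <;> norm_num [bernPMF]
  rw [h0]
  unfold prodPMF
  rw [← Finset.prod_div_distrib]
  rw [Real.log_prod (fun t _ => by
    have := bern_pos hδ t (y t); positivity)]
  unfold llr
  refine Finset.sum_congr rfl fun t _ => ?_
  cases hyt : y t <;> simp only [bernPMF, if_true, if_false, Bool.false_eq_true] <;>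
    · congr 1; ring

lemma kl_eq_sum (hδ : ∀ t, |δ t| ≤ 1/4) :
    klProd B δ = ∑ t, kco (δ t) := by
  unfold klProd
  rw [Finset.sum_congr rfl (fun y _ => by rw [log_ratio hδ y])]
  unfold llr
  simp_rw [Finset.mul_sum]
  rw [Finset.sum_comm]
  refine Finset.sum_congr rfl fun t _ => ?_
  have H := marginal δ t
    (fun v => if v then Real.log (2 * (1/2 + δ t)) else Real.log (2 * (1/2 - δ t)))
  simp only [if_true, if_false, Bool.false_eq_true] at H
  rw [H]
  simp [kco]

end main

/-- **LLR concentration under `P_δ`.** There exist universal constants `a₀, c₀ > 0`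
(independent of `B` and `δ`) such that whenever each `|δ_t| ≤ 1/4` and
`KL(P_δ ‖ P_0) ≥ a₀`, the log-likelihood ratio satisfies
`P_δ(L ≤ (1/2)·KL(P_δ‖P_0)) ≤ exp(−c₀·KL(P_δ‖P_0))`. -/
theorem llr_concentration :
    ∃ a₀ > (0 : ℝ), ∃ c₀ > (0 : ℝ), ∀ (B : ℕ), 1 ≤ B → ∀ δ : Fin B → ℝ,
      (∀ t, |δ t| ≤ 1/4) → a₀ ≤ klProd B δ →
      probEvent B δ {y | llr B δ y ≤ (1/2) * klProd B δ} ≤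
        Real.exp (-(c₀ * klProd B δ)) := by
  classical
  refine ⟨1, one_pos, 1/576, by norm_num, ?_⟩
  intro B _hB δ hδ _ha
  rw [kl_eq_sum hδ]
  set S := ∑ t, kco (δ t) with hS
  set c : ℝ := 1/144 with hc
  -- MGF bound
  have hmgf : ∑ y : Fin B → Bool, prodPMF B δ y * Real.exp (c * (S - llr B δ y))
      ≤ Real.exp (S / 576) := by
    have hexp : ∀ y : Fin B → Bool, prodPMF B δ y * Real.exp (c * (S - llr B δ y))
        = ∏ t, (bernPMF (1/2 + δ t) (y t) * Real.exp (c * (kco (δ t) -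
            (if y t then Real.log (2 * (1/2 + δ t)) else Real.log (2 * (1/2 - δ t)))))) := by
      intro y
      have h1 : c * (S - llr B δ y) = ∑ t, c * (kco (δ t) -
          (if y t then Real.log (2 * (1/2 + δ t)) else Real.log (2 * (1/2 - δ t)))) := by
        rw [hS]; unfold llr
        rw [← Finset.sum_sub_distrib, Finset.mul_sum]
      rw [h1, Real.exp_sum]
      unfold prodPMF
      rw [Finset.prod_mul_distrib]
    rw [Finset.sum_congr rfl (fun y _ => hexp y)]
    have Hsp := sum_prod_bool (fun t v => bernPMF (1/2 + δ t) v * Real.exp (c * (kco (δ t) -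
        (if v then Real.log (2 * (1/2 + δ t)) else Real.log (2 * (1/2 - δ t))))))
    simp only [if_true, if_false, Bool.false_eq_true] at Hsp
    rw [Hsp]
    have hb : ∀ t : Fin B, bernPMF (1/2 + δ t) true *
          Real.exp (c * (kco (δ t) - Real.log (2 * (1/2 + δ t)))) +
        bernPMF (1/2 + δ t) false *
          Real.exp (c * (kco (δ t) - Real.log (2 * (1/2 - δ t))))
        ≤ Real.exp (kco (δ t) / 576) := by
      intro t
      have := coord_mgf (hδ t)
      simp only [bernPMF, if_true, if_false, Bool.false_eq_true, hc]
      calc (1/2 + δ t) * Real.exp (1/144 * (kco (δ t) - Real.log (2 * (1/2 + δ t)))) +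
            (1 - (1/2 + δ t)) * Real.exp (1/144 * (kco (δ t) - Real.log (2 * (1/2 - δ t))))
          = (1/2 + δ t) * Real.exp ((1/144) * (kco (δ t) - Real.log (2 * (1/2 + δ t)))) +
            (1/2 - δ t) * Real.exp ((1/144) * (kco (δ t) - Real.log (2 * (1/2 - δ t)))) := by
            ring
        _ ≤ Real.exp (kco (δ t) / 576) := this
    calc ∏ t, (bernPMF (1/2 + δ t) true *
            Real.exp (c * (kco (δ t) - Real.log (2 * (1/2 + δ t)))) +
          bernPMF (1/2 + δ t) false *
            Real.exp (c * (kco (δ t) - Real.log (2 * (1/2 - δ t)))))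
        ≤ ∏ t, Real.exp (kco (δ t) / 576) := by
          apply Finset.prod_le_prod
          · intro t _
            have h1 := (bern_pos hδ t true).le
            have h2 := (bern_pos hδ t false).le
            positivity
          · intro t _; exact hb t
      _ = Real.exp (∑ t, kco (δ t) / 576) := (Real.exp_sum _ _).symm
      _ = Real.exp (S / 576) := by rw [hS, Finset.sum_div]
  -- pointwise Chernoff bound
  have hpt : ∀ y : Fin B → Bool,
      Set.indicator {y | llr B δ y ≤ 1/2 * S} (prodPMF B δ) y
        ≤ prodPMF B δ y * Real.exp (c * (1/2 * S - llr B δ y)) := by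
    intro y
    by_cases hy : y ∈ {y | llr B δ y ≤ 1/2 * S}
    · rw [Set.indicator_of_mem hy]
      have hy' : llr B δ y ≤ 1/2 * S := hy
      have hnn : (0:ℝ) ≤ c * (1/2 * S - llr B δ y) := by
        apply mul_nonneg (by rw [hc]; norm_num)
        linarith
      exact le_mul_of_one_le_right (prodPMF_pos hδ y).le (Real.one_le_exp hnn)
    · rw [Set.indicator_of_notMem hy]
      have := (prodPMF_pos hδ y).le
      positivity
  calc probEvent B δ {y | llr B δ y ≤ 1/2 * S}
      ≤ ∑ y : Fin B → Bool, prodPMF B δ y * Real.exp (c * (1/2 * S - llr B δ y)) :=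
        Finset.sum_le_sum fun y _ => hpt y
    _ = Real.exp (-(c * S / 2)) *
        ∑ y : Fin B → Bool, prodPMF B δ y * Real.exp (c * (S - llr B δ y)) := by
        have hterm : ∀ y : Fin B → Bool, Real.exp (c * (1/2 * S - llr B δ y))
            = Real.exp (-(c * S / 2)) * Real.exp (c * (S - llr B δ y)) := by
          intro y; rw [← Real.exp_add]; congr 1; ring
        simp_rw [hterm, Finset.mul_sum]
        exact Finset.sum_congr rfl fun y _ => by ring
    _ ≤ Real.exp (-(c * S / 2)) * Real.exp (S / 576) :=
        mul_le_mul_of_nonneg_left hmgf (Real.exp_pos _).le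
    _ = Real.exp (-(1/576 * S)) := by
        rw [← Real.exp_add]
        congr 1
        rw [hc]; ring
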